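/- If a T₁ topological space X carries the inductive (final) topology with respect to a countable cover 𝒞 of X by subspaces each possessing a countable Pytkeev network, then X has a countable Pytkeev network. -/

import Mathlib

open Set Filter Topology TopologicalSpace

/-- A set `A` accumulates at `x` if every neighborhood of `x` contains
infinitely many points of `A`. -/
def AccumulatesAt {X : Type*} [TopologicalSpace X] (A : Set X) (x : X) : Prop :=
  ∀ U ∈ 𝓝 x, (U ∩ A).Infinite

/-- `𝒩` is a network: for each point and open neighborhood there is a member of `𝒩`
containing the point and contained in the neighborhood. -/
def IsNetwork {X : Type*} [TopologicalSpace X] (𝒩 : Set (Set X)) : Prop :=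
  ∀ (x : X) (U : Set X), IsOpen U → x ∈ U → ∃ N ∈ 𝒩, x ∈ N ∧ N ⊆ U

/-- `𝒩` is a Pytkeev network. -/
def IsPytkeevNetwork {X : Type*} [TopologicalSpace X] (𝒩 : Set (Set X)) : Prop :=
  IsNetwork 𝒩 ∧ ∀ (x : X) (U : Set X), IsOpen U → x ∈ U →
    ∀ A : Set X, AccumulatesAt A x → ∃ N ∈ 𝒩, N ⊆ U ∧ (N ∩ A).Infinite

/-- `𝒩` is a k-network. -/
def IsKNetwork {X : Type*} [TopologicalSpace X] (𝒩 : Set (Set X)) : Prop :=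
  ∀ (U K : Set X), IsOpen U → IsCompact K → K ⊆ U →
    ∃ F ⊆ 𝒩, F.Finite ∧ K ⊆ ⋃₀ F ∧ ⋃₀ F ⊆ U

/-- If a `T₁` space carries the inductive topology with respect to a countable cover by
subspaces with countable Pytkeev networks, then it has a countable Pytkeev network. -/
theorem pytkeevNetwork_of_inductive_topology {X : Type*} [TopologicalSpace X] [T1Space X]
    (𝒞 : Set (Set X)) (hcount : 𝒞.Countable) (hcover : ⋃₀ 𝒞 = univ)
    (hind : ∀ U : Set X, IsOpen U ↔ ∀ C ∈ 𝒞, IsOpen ((Subtype.val ⁻¹' U : Set ↥C)))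
    (h𝒞 : ∀ C ∈ 𝒞, ∃ 𝒩 : Set (Set ↥C), 𝒩.Countable ∧ IsPytkeevNetwork 𝒩) :
    ∃ 𝒩 : Set (Set X), 𝒩.Countable ∧ IsPytkeevNetwork 𝒩 := by
  choose 𝒩f hcnt hpyt using h𝒞
  refine ⟨{N | ∃ C, ∃ hC : C ∈ 𝒞, ∃ M ∈ 𝒩f C hC, N = Subtype.val '' M}, ?_, ?_, ?_⟩
  · have heq : {N | ∃ C, ∃ hC : C ∈ 𝒞, ∃ M ∈ 𝒩f C hC, N = Subtype.val '' M}
        = ⋃ (c : 𝒞), (fun M => Subtype.val '' M) '' (𝒩f c.1 c.2) := by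
      ext N
      simp only [Set.mem_setOf_eq, Set.mem_iUnion, Set.mem_image, Subtype.exists]
      constructor
      · rintro ⟨C, hC, M, hM, rfl⟩; exact ⟨C, hC, M, hM, rfl⟩
      · rintro ⟨C, hC, M, hM, rfl⟩; exact ⟨C, hC, M, hM, rfl⟩
    rw [heq]
    haveI := hcount.to_subtype
    exact Set.countable_iUnion fun c => (hcnt c.1 c.2).image _
  · intro x U hU hxU
    have hx : x ∈ ⋃₀ 𝒞 := hcover ▸ Set.mem_univ x
    obtain ⟨C, hC, hxC⟩ := hx
    have hUopen : IsOpen (Subtype.val ⁻¹' U : Set ↥C) := (hind U).1 hU C hC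
    obtain ⟨M, hM, hxM, hMU⟩ := (hpyt C hC).1 ⟨x, hxC⟩ _ hUopen hxU
    exact ⟨Subtype.val '' M, ⟨C, hC, M, hM, rfl⟩, ⟨⟨x, hxC⟩, hxM, rfl⟩,
      (Set.image_mono hMU).trans (Set.image_preimage_subset _ _)⟩
  · intro x U hU hxU A hA
    by_contra hcon
    push_neg at hcon
    -- no member of the candidate network works
    have hcon' : ∀ C (hC : C ∈ 𝒞), ∀ M ∈ 𝒩f C hC, Subtype.val '' M ⊆ U →
        (Subtype.val '' M ∩ A).Finite := by
      intro C hC M hM hsub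
      have := hcon (Subtype.val '' M) ⟨C, hC, M, hM, rfl⟩ hsub
      exact this
    -- then the trace of A ∩ U never accumulates inside U on any C
    have key : ∀ C (hC : C ∈ 𝒞), ∀ p : ↥C, (p : X) ∈ U →
        ¬ AccumulatesAt (Subtype.val ⁻¹' (A ∩ U) : Set ↥C) p := by
      intro C hC p hpU hacc
      have hUopen : IsOpen (Subtype.val ⁻¹' U : Set ↥C) := (hind U).1 hU C hC
      obtain ⟨M, hM, hMU, hMinf⟩ := (hpyt C hC).2 p _ hUopen hpU _ hacc
      have hsub : Subtype.val '' M ⊆ U :=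
        (Set.image_mono hMU).trans (Set.image_preimage_subset _ _)
      have himg : Subtype.val '' (M ∩ Subtype.val ⁻¹' (A ∩ U))
          ⊆ Subtype.val '' M ∩ A := by
        rintro _ ⟨q, ⟨hqM, hqA⟩, rfl⟩
        exact ⟨⟨q, hqM, rfl⟩, hqA.1⟩
      exact ((hMinf.image Subtype.val_injective.injOn).mono himg)
        (hcon' C hC M hM hsub)
    -- build an open set W ∋ x with W ∩ A ⊆ {x}
    set W : Set X := U \ ((A ∩ U) \ {x}) with hWdef
    have hWopen : IsOpen W := by
      rw [hind]
      intro C hC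
      have hUopen : IsOpen (Subtype.val ⁻¹' U : Set ↥C) := (hind U).1 hU C hC
      rw [isOpen_iff_forall_mem_open]
      intro p hp
      have hpW : (p : X) ∈ W := hp
      have hpU : (p : X) ∈ U := hpW.1
      have hnacc := key C hC p hpU
      rw [AccumulatesAt] at hnacc
      push_neg at hnacc
      obtain ⟨V, hV, hVfin⟩ := hnacc
      set T : Set ↥C := Subtype.val ⁻¹' ((A ∩ U) \ {x}) with hTdef
      have hTS : T ⊆ Subtype.val ⁻¹' (A ∩ U) := fun q hq => hq.1
      set F : Set ↥C := (V ∩ T) \ {p} with hFdef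
      have hFfin : F.Finite :=
        hVfin.subset (fun q hq => ⟨hq.1.1, hTS hq.1.2⟩)
      refine ⟨(interior V ∩ Subtype.val ⁻¹' U) \ F, ?_, ?_, ?_⟩
      · rintro q ⟨⟨hqV, hqU⟩, hqF⟩
        show (q : X) ∈ U ∧ (q : X) ∉ (A ∩ U) \ {x}
        refine ⟨hqU, fun hqT => ?_⟩
        have hqT' : q ∈ T := hqT
        have : q ∈ F := ⟨⟨interior_subset hqV, hqT'⟩, fun h => by
          rw [Set.mem_singleton_iff] at h
          subst h
          exact hpW.2 hqT⟩
        exact hqF this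
      · exact ((isOpen_interior.inter hUopen).sdiff hFfin.isClosed)
      · exact ⟨⟨mem_interior_iff_mem_nhds.mpr hV, hpU⟩, fun h => h.2 rfl⟩
    have hxW : x ∈ W := ⟨hxU, fun h => h.2 rfl⟩
    have hinf := hA W (hWopen.mem_nhds hxW)
    have hsub : W ∩ A ⊆ {x} := by
      rintro y ⟨⟨hyU, hy2⟩, hyA⟩
      by_contra h
      exact hy2 ⟨⟨hyA, hyU⟩, h⟩
    exact hinf ((Set.finite_singleton x).subset hsub)
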